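/- Let H ∈ M_n(ℂ) with associated non-backtracking matrix B. Let λ ∈ ℂ satisfy λ² ≠ H_ij·H_ji for all i, j ∈ [n]. Define the n×n matrix H(λ) by H(λ)_ij = λ·H_ij/(λ² − H_ij·H_ji) and the diagonal matrix M(λ) = diag(m_i(λ))_{i∈[n]} with m_i(λ) = 1 + Σ_{k∈[n]} H_ik·H_ki/(λ² − H_ik·H_ki). Then λ is an eigenvalue of B if and only if det(M(λ) − H(λ)) = 0. -/

import Mathlib

/-- The non-backtracking operator of a square matrix `H`: the matrix indexed by ordered
pairs `e = (i,j)`, `f = (k,l)` with entries `B e f = H k l` if `j = k` and `i ≠ l`,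
and `0` otherwise. -/
def nonBacktracking {n : ℕ} (H : Matrix (Fin n) (Fin n) ℂ) :
    Matrix (Fin n × Fin n) (Fin n × Fin n) ℂ :=
  Matrix.of fun e f => if e.2 = f.1 ∧ e.1 ≠ f.2 then H f.1 f.2 else 0

open Matrix Finset

namespace IharaBassAux

variable {n : ℕ} (H : Matrix (Fin n) (Fin n) ℂ) (z : ℂ)

/-- denominator -/
noncomputable def Δ (e : Fin n × Fin n) : ℂ := z ^ 2 - H e.1 e.2 * H e.2 e.1

/-- the local (swap) part:  `zI + J`. -/
noncomputable def A : Matrix (Fin n × Fin n) (Fin n × Fin n) ℂ :=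
  Matrix.of fun e f => (if f = e then z else 0) + (if f = (e.2, e.1) then H e.2 e.1 else 0)

/-- explicit inverse of `A`. -/
noncomputable def W : Matrix (Fin n × Fin n) (Fin n × Fin n) ℂ :=
  Matrix.of fun e f =>
    (if f = e then z / Δ H z e else 0) - (if f = (e.2, e.1) then H e.2 e.1 / Δ H z e else 0)

noncomputable def U : Matrix (Fin n × Fin n) (Fin n) ℂ :=
  Matrix.of fun e m => if e.2 = m then 1 else 0

noncomputable def V : Matrix (Fin n) (Fin n × Fin n) ℂ :=
  Matrix.of fun j f => if f.1 = j then H f.1 f.2 else 0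

variable (hz : ∀ i j : Fin n, z ^ 2 ≠ H i j * H j i)
include hz in
lemma Δ_ne (e : Fin n × Fin n) : Δ H z e ≠ 0 :=
  sub_ne_zero.mpr (hz e.1 e.2)

lemma Δ_swap (e : Fin n × Fin n) : Δ H z (e.2, e.1) = Δ H z e := by
  simp [Δ, mul_comm]

include hz in
lemma AW : A H z * W H z = 1 := by
  ext e g
  rw [Matrix.mul_apply]
  have hΔ := Δ_ne H z hz e
  simp only [A, W, Matrix.of_apply, add_mul, ite_mul, zero_mul, Finset.sum_add_distrib,
    Finset.sum_ite_eq', Finset.mem_univ, if_true]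
  have hone : (1 : Matrix (Fin n × Fin n) (Fin n × Fin n) ℂ) e g = if g = e then 1 else 0 := by
    simp [Matrix.one_apply, eq_comm]
  rw [hone]
  simp only [Matrix.of_apply, Prod.mk.eta, Δ_swap H z e]
  split_ifs with h1 h2 h2
  · have he : e.1 = e.2 := congrArg Prod.fst (h1 ▸ h2)
    simp only [Δ] at hΔ ⊢
    rw [he] at hΔ ⊢
    field_simp
    rw [div_eq_one_iff_eq (by simpa [sq] using hΔ)]
    ring
  · simp only [Δ] at hΔ ⊢
    field_simp
    ring
  · ring
  · ring

lemma AUV : A H z - U (n := n) * V H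
    = z • (1 : Matrix (Fin n × Fin n) (Fin n × Fin n) ℂ) - nonBacktracking H := by
  ext e f
  rw [Matrix.sub_apply, Matrix.sub_apply, Matrix.mul_apply, Matrix.smul_apply, Matrix.one_apply]
  simp only [A, U, V, nonBacktracking, Matrix.of_apply, ite_mul, one_mul, zero_mul,
    Finset.sum_ite_eq, Finset.mem_univ, if_true, smul_eq_mul, mul_ite, mul_one, mul_zero]
  by_cases h2 : f = (e.2, e.1)
  · subst h2
    by_cases h1 : e = (e.2, e.1)
    · have h1' : ((e.2, e.1) : Fin n × Fin n) = e := h1.symm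
      simp [h1']
    · simp [h1, show ((e.2, e.1) : Fin n × Fin n) ≠ e from fun h => h1 h.symm]
  · by_cases h1 : f = e
    · subst h1
      have hne : f.1 ≠ f.2 := fun h => h2 (Prod.ext_iff.mpr ⟨h, h.symm⟩)
      simp [hne, Ne.symm hne, h2]
    · have hef : ¬ e = f := fun h => h1 h.symm
      by_cases h3 : f.1 = e.2
      · have h4 : e.1 ≠ f.2 := fun h => h2 (Prod.ext_iff.mpr ⟨h3, h.symm⟩)
        rw [if_neg h1, if_neg h2, if_pos h3.symm, if_neg hef, if_pos ⟨h3.symm, h4⟩]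
        ring
      · rw [if_neg h1, if_neg h2, if_neg (fun h => h3 h.symm), if_neg hef,
          if_neg (fun hc => h3 hc.1.symm)]
        ring

include hz in
lemma VWU : (1 : Matrix (Fin n) (Fin n) ℂ) - V H * (W H z * U (n := n)) =
    Matrix.diagonal (fun i : Fin n => 1 + ∑ k, H i k * H k i / (z ^ 2 - H i k * H k i))
      - Matrix.of (fun i j : Fin n => z * H i j / (z ^ 2 - H i j * H j i)) := by
  have hWU : W H z * U (n := n) = Matrix.of (fun (f : Fin n × Fin n) (m : Fin n) =>
      (if f.2 = m then z / Δ H z f else 0) - (if f.1 = m then H f.2 f.1 / Δ H z f else 0)) := by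
    ext f m
    rw [Matrix.mul_apply]
    simp only [W, U, Matrix.of_apply, sub_mul, ite_mul, zero_mul,
      Finset.sum_sub_distrib, Finset.sum_ite_eq', Finset.mem_univ, if_true]
    simp [mul_ite, mul_one, mul_zero]
  ext i j
  rw [hWU, Matrix.sub_apply, Matrix.mul_apply, Fintype.sum_prod_type]
  simp only [V, Matrix.of_apply, ite_mul, zero_mul]
  rw [Finset.sum_eq_single i (by intro a _ ha; simp [ha]) (by simp)]
  simp only [if_pos rfl]
  rcases eq_or_ne i j with rfl | hij
  · simp only [Matrix.sub_apply, Matrix.diagonal_apply_eq, Matrix.of_apply, Matrix.one_apply_eq,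
      if_pos rfl, mul_sub, Finset.sum_sub_distrib, mul_ite, mul_zero, Finset.sum_ite_eq',
      Finset.mem_univ, if_true, Δ]
    simp only [← mul_div_assoc]
    ring
  · simp only [Matrix.sub_apply, Matrix.diagonal_apply_ne _ hij, Matrix.of_apply,
      Matrix.one_apply_ne hij, if_neg hij, mul_sub, mul_zero, sub_zero, mul_ite,
      Finset.sum_ite_eq', Finset.mem_univ, if_true, Δ]
    ring

end IharaBassAux

/-- **Generalized Ihara–Bass formula.**
Let `H ∈ M_n(ℂ)` with non-backtracking matrix `B`, and let `z ∈ ℂ` satisfy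
`z² ≠ Hᵢⱼ Hⱼᵢ` for all `i, j`.  With `H(z)ᵢⱼ = z Hᵢⱼ/(z² - Hᵢⱼ Hⱼᵢ)` and
`M(z) = diag(1 + ∑ₖ Hᵢₖ Hₖᵢ/(z² - Hᵢₖ Hₖᵢ))`, the number `z` is an eigenvalue of `B`
if and only if `det(M(z) - H(z)) = 0`. -/
theorem ihara_bass_formula {n : ℕ} (H : Matrix (Fin n) (Fin n) ℂ) (z : ℂ)
    (hz : ∀ i j : Fin n, z ^ 2 ≠ H i j * H j i) :
    z ∈ spectrum ℂ (nonBacktracking H) ↔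
      (Matrix.diagonal (fun i : Fin n => 1 + ∑ k, H i k * H k i / (z ^ 2 - H i k * H k i))
        - Matrix.of fun i j : Fin n => z * H i j / (z ^ 2 - H i j * H j i)).det = 0 := by
  open IharaBassAux in
  refine ?_
  have hAW := AW H z hz
  have hdetA : (A H z).det ≠ 0 := (Matrix.isUnit_det_of_right_inverse hAW).ne_zero
  have hfac : algebraMap ℂ (Matrix (Fin n × Fin n) (Fin n × Fin n) ℂ) z - nonBacktracking H
      = A H z * ((1 : Matrix (Fin n × Fin n) (Fin n × Fin n) ℂ) - W H z * (U (n := n) * V H)) := by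
    rw [Algebra.algebraMap_eq_smul_one, ← AUV H z, mul_sub, mul_one, ← Matrix.mul_assoc,
      hAW, Matrix.one_mul]
  rw [spectrum.mem_iff, hfac, Matrix.isUnit_iff_isUnit_det, isUnit_iff_ne_zero, not_ne_iff,
    Matrix.det_mul]
  have key : ((1 : Matrix (Fin n × Fin n) (Fin n × Fin n) ℂ) - W H z * (U (n := n) * V H)).det
      = ((1 : Matrix (Fin n) (Fin n) ℂ) - V H * (W H z * U (n := n))).det := by
    have hcomm := Matrix.det_one_add_mul_comm (-(W H z * U (n := n))) (V H)
    rw [Matrix.neg_mul, Matrix.mul_neg, Matrix.mul_assoc, ← sub_eq_add_neg, ← sub_eq_add_neg] at hcomm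
    exact hcomm
  rw [key, VWU H z hz, mul_eq_zero]
  simp [hdetA]
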